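/- arXiv:2510.23450 — 2 statements merged into one kernel-verified Lean document; each statement's English description precedes it below -/
import Mathlib

section
/- Let M ∈ L(ℂ^d) satisfy Re(Mξ,ξ) ≥ m|ξ|² for all ξ with m > 0, and suppose N(M) ⊆ Σ_ω for some ω ∈ [0,π/2). Let p ≥ 2 with m − σ_p‖Im M‖ > 0, where σ_p = (p−2)/(2√(p−1)) and Im M = (M−M*)/(2i) viewed as acting on ℝ^d. Then N_p(M) ⊆ Σ_{α_p} where tan(α_p) = (tan(ω)·m + σ_p‖Re M‖)/(m − σ_p‖Im M‖). -/
noncomputable section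

open Complex

/-- The closed sector of half-angle `θ` in the complex plane. -/
def sector (θ : ℝ) : Set ℂ := {z : ℂ | |z.arg| ≤ θ} ∪ {0}

/-- The ℝ-linear map `J_p(α + iβ) = 2α/p' + i·2β/p`, acting coordinatewise. -/
def Jp {d : ℕ} (p : ℝ) (ξ : EuclideanSpace ℂ (Fin d)) : EuclideanSpace ℂ (Fin d) :=
  (WithLp.equiv 2 (Fin d → ℂ)).symm fun i =>
    ((2 / (p / (p - 1)) * (ξ i).re : ℝ) : ℂ) + Complex.I * ((2 / p * (ξ i).im : ℝ) : ℂ)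

/-- `σ_p = (p−2)/(2√(p−1))`. -/
def sigmaP (p : ℝ) : ℝ := (p - 2) / (2 * Real.sqrt (p - 1))

/-! ### Auxiliary material -/

/-- Embedding of a real vector into `ℂ^d`. -/
def embC {d : ℕ} (x : Fin d → ℝ) : EuclideanSpace ℂ (Fin d) :=
  (WithLp.equiv 2 (Fin d → ℂ)).symm fun i => ((x i : ℝ) : ℂ)

/-- A real vector as an element of `EuclideanSpace`. -/
def embR {d : ℕ} (x : Fin d → ℝ) : EuclideanSpace ℝ (Fin d) :=
  (WithLp.equiv 2 (Fin d → ℝ)).symm x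

lemma toEuclideanCLM_apply_coord {𝕜 : Type*} [RCLike 𝕜] {d : ℕ} (N : Matrix (Fin d) (Fin d) 𝕜)
    (y : EuclideanSpace 𝕜 (Fin d)) (i : Fin d) :
    (Matrix.toEuclideanCLM (𝕜 := 𝕜) N y) i = ∑ j, N i j * y j := by
  have h := congrFun (Matrix.ofLp_toEuclideanCLM N y) i
  simpa [Matrix.toLin'_apply, Matrix.mulVec, dotProduct] using h

lemma arg_eq_arctan' {z : ℂ} (hre : 0 < z.re) : z.arg = Real.arctan (z.im / z.re) := by
  rw [← Complex.tan_arg]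
  exact (Real.arctan_tan (Complex.neg_pi_div_two_lt_arg_iff.2 (Or.inl hre))
    (Complex.arg_lt_pi_div_two_iff.2 (Or.inl hre))).symm

lemma mem_sector_of (θ : ℝ) (hθ0 : 0 ≤ θ) (hθ : θ < Real.pi / 2) (z : ℂ)
    (hre : 0 < z.re) (him : |z.im| ≤ Real.tan θ * z.re) : z ∈ sector θ := by
  left
  rw [Set.mem_setOf_eq, arg_eq_arctan' hre, abs_le]
  obtain ⟨h1, h2⟩ := abs_le.1 him
  have hpi := Real.pi_pos
  constructor
  · rw [← Real.arctan_tan (x := -θ) (by linarith) (by linarith)]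
    refine Real.arctan_strictMono.monotone ?_
    rw [Real.tan_neg, le_div_iff₀ hre]
    linarith
  · rw [← Real.arctan_tan (x := θ) (by linarith) hθ]
    refine Real.arctan_strictMono.monotone ?_
    rw [div_le_iff₀ hre]
    linarith

lemma sector_bound (θ : ℝ) (hθ0 : 0 ≤ θ) (hθ : θ < Real.pi / 2) (z : ℂ)
    (hz : z ∈ sector θ) (hre : 0 < z.re) : |z.im| ≤ Real.tan θ * z.re := by
  have hpi := Real.pi_pos
  rcases hz with h | h
  · rw [Set.mem_setOf_eq, arg_eq_arctan' hre, abs_le] at h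
    obtain ⟨h1, h2⟩ := h
    have hmem1 : Real.arctan (z.im / z.re) ∈ Set.Ioo (-(Real.pi/2)) (Real.pi/2) :=
      ⟨Real.neg_pi_div_two_lt_arctan _, Real.arctan_lt_pi_div_two _⟩
    have hmem2 : θ ∈ Set.Ioo (-(Real.pi/2)) (Real.pi/2) := ⟨by linarith, hθ⟩
    have hmem3 : -θ ∈ Set.Ioo (-(Real.pi/2)) (Real.pi/2) := ⟨by linarith, by linarith⟩
    have hq2 : z.im / z.re ≤ Real.tan θ := by
      calc z.im / z.re = Real.tan (Real.arctan (z.im / z.re)) := (Real.tan_arctan _).symm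
        _ ≤ Real.tan θ := Real.strictMonoOn_tan.monotoneOn hmem1 hmem2 h2
    have hq1 : -Real.tan θ ≤ z.im / z.re := by
      calc -Real.tan θ = Real.tan (-θ) := (Real.tan_neg θ).symm
        _ ≤ Real.tan (Real.arctan (z.im / z.re)) :=
            Real.strictMonoOn_tan.monotoneOn hmem3 hmem1 h1
        _ = z.im / z.re := Real.tan_arctan _
    rw [abs_le]
    constructor
    · have := (le_div_iff₀ hre).1 hq1; linarith
    · have := (div_le_iff₀ hre).1 hq2; linarith
  · rw [Set.mem_singleton_iff] at h
    simp [h] at hre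

set_option maxRecDepth 8000 in
lemma inner_Jp {d : ℕ} (p : ℝ) (hp : 2 ≤ p) (ξ y : EuclideanSpace ℂ (Fin d)) :
    (inner ℂ (Jp p ξ) y : ℂ) = ((2/p : ℝ) : ℂ) * inner ℂ ξ y
      + ((2*(p-2)/p : ℝ) : ℂ) * inner ℂ (embC fun i => (ξ i).re) y := by
  have hp0 : p ≠ 0 := by linarith
  have hp1 : p - 1 ≠ 0 := by linarith
  simp only [Jp, embC, PiLp.inner_apply, RCLike.inner_apply, WithLp.equiv_symm_apply, PiLp.toLp_apply,
    Finset.mul_sum, ← Finset.sum_add_distrib]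
  refine Finset.sum_congr rfl fun i _ => ?_
  apply Complex.ext <;>
    simp [Complex.mul_re, Complex.mul_im, Complex.add_re, Complex.add_im, map_ofNat, -Complex.ofReal_div, -Complex.ofReal_mul, -Complex.ofReal_sub] <;>
    field_simp <;> ring

set_option maxRecDepth 8000 in
lemma re_inner_real_left {d : ℕ} (M : Matrix (Fin d) (Fin d) ℂ) (x : Fin d → ℝ)
    (ξ : EuclideanSpace ℂ (Fin d)) :
    (inner ℂ (embC x) (Matrix.toEuclideanCLM (𝕜 := ℂ) M ξ) : ℂ).re
      = (inner ℝ (embR x) (Matrix.toEuclideanCLM (𝕜 := ℝ) (M.map Complex.re)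
            (embR fun i => (ξ i).re)) : ℝ)
      - (inner ℝ (embR x) (Matrix.toEuclideanCLM (𝕜 := ℝ) (M.map Complex.im)
            (embR fun i => (ξ i).im)) : ℝ) := by
  simp only [embC, embR, PiLp.inner_apply, RCLike.inner_apply, WithLp.equiv_symm_apply, PiLp.toLp_apply,
    toEuclideanCLM_apply_coord, Matrix.map_apply, Complex.re_sum, conj_trivial,
    Complex.conj_ofReal, Finset.mul_sum, Finset.sum_mul]
  rw [← Finset.sum_sub_distrib]
  refine Finset.sum_congr rfl fun i _ => ?_
  rw [← Finset.sum_sub_distrib]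
  refine Finset.sum_congr rfl fun j _ => ?_
  simp [Complex.mul_re, Complex.mul_im]
  ring

set_option maxRecDepth 8000 in
lemma im_inner_real_left {d : ℕ} (M : Matrix (Fin d) (Fin d) ℂ) (x : Fin d → ℝ)
    (ξ : EuclideanSpace ℂ (Fin d)) :
    (inner ℂ (embC x) (Matrix.toEuclideanCLM (𝕜 := ℂ) M ξ) : ℂ).im
      = (inner ℝ (embR x) (Matrix.toEuclideanCLM (𝕜 := ℝ) (M.map Complex.im)
            (embR fun i => (ξ i).re)) : ℝ)
      + (inner ℝ (embR x) (Matrix.toEuclideanCLM (𝕜 := ℝ) (M.map Complex.re)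
            (embR fun i => (ξ i).im)) : ℝ) := by
  simp only [embC, embR, PiLp.inner_apply, RCLike.inner_apply, WithLp.equiv_symm_apply, PiLp.toLp_apply,
    toEuclideanCLM_apply_coord, Matrix.map_apply, Complex.im_sum, conj_trivial,
    Complex.conj_ofReal, Finset.mul_sum, Finset.sum_mul]
  rw [← Finset.sum_add_distrib]
  refine Finset.sum_congr rfl fun i _ => ?_
  rw [← Finset.sum_add_distrib]
  refine Finset.sum_congr rfl fun j _ => ?_
  simp [Complex.mul_re, Complex.mul_im]
  ring

set_option maxRecDepth 8000 in
lemma re_inner_embed {d : ℕ} (M : Matrix (Fin d) (Fin d) ℂ) (x : Fin d → ℝ) :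
    (inner ℂ (embC x) (Matrix.toEuclideanCLM (𝕜 := ℂ) M (embC x)) : ℂ).re
      = (inner ℝ (embR x) (Matrix.toEuclideanCLM (𝕜 := ℝ) (M.map Complex.re) (embR x)) : ℝ) := by
  simp only [embC, embR, PiLp.inner_apply, RCLike.inner_apply, WithLp.equiv_symm_apply, PiLp.toLp_apply,
    toEuclideanCLM_apply_coord, Matrix.map_apply, Complex.re_sum, conj_trivial,
    Complex.conj_ofReal, Finset.mul_sum, Finset.sum_mul]
  refine Finset.sum_congr rfl fun i _ => Finset.sum_congr rfl fun j _ => ?_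
  simp [Complex.mul_re]

set_option maxRecDepth 8000 in
lemma im_inner_embed {d : ℕ} (M : Matrix (Fin d) (Fin d) ℂ) (x : Fin d → ℝ) :
    (inner ℂ (embC x) (Matrix.toEuclideanCLM (𝕜 := ℂ) M (embC x)) : ℂ).im
      = (inner ℝ (embR x) (Matrix.toEuclideanCLM (𝕜 := ℝ) (M.map Complex.im) (embR x)) : ℝ) := by
  simp only [embC, embR, PiLp.inner_apply, RCLike.inner_apply, WithLp.equiv_symm_apply, PiLp.toLp_apply,
    toEuclideanCLM_apply_coord, Matrix.map_apply, Complex.im_sum, conj_trivial,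
    Complex.conj_ofReal, Finset.mul_sum, Finset.sum_mul]
  refine Finset.sum_congr rfl fun i _ => Finset.sum_congr rfl fun j _ => ?_
  simp [Complex.mul_im]

lemma norm_embed {d : ℕ} (x : Fin d → ℝ) : ‖embC x‖ = ‖embR x‖ := by
  rw [embC, embR, EuclideanSpace.norm_eq, EuclideanSpace.norm_eq]
  congr 1
  exact Finset.sum_congr rfl fun i _ => by simp [WithLp.equiv_symm_apply, PiLp.toLp_apply]

lemma euclid_norm_sq {d : ℕ} (x : EuclideanSpace ℝ (Fin d)) : ‖x‖ ^ 2 = ∑ i, (x i) ^ 2 := by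
  rw [EuclideanSpace.norm_eq, Real.sq_sqrt (by positivity)]
  exact Finset.sum_congr rfl fun i _ => by rw [Real.norm_eq_abs, _root_.sq_abs]

lemma euclid_norm_sq_c {d : ℕ} (x : EuclideanSpace ℂ (Fin d)) :
    ‖x‖ ^ 2 = ∑ i, ((x i).re ^ 2 + (x i).im ^ 2) := by
  rw [EuclideanSpace.norm_eq, Real.sq_sqrt (by positivity)]
  refine Finset.sum_congr rfl fun i _ => ?_
  rw [Complex.sq_norm, Complex.normSq_apply]; ring

lemma numrange_bound {d : ℕ} (M : Matrix (Fin d) (Fin d) ℂ) (m ω : ℝ) (hm : 0 < m)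
    (hcoer : ∀ ξ : EuclideanSpace ℂ (Fin d),
      m * ‖ξ‖ ^ 2 ≤ (inner ℂ ξ (Matrix.toEuclideanCLM (𝕜 := ℂ) M ξ) : ℂ).re)
    (hω : ω ∈ Set.Ico 0 (Real.pi / 2))
    (hN : ∀ ξ : EuclideanSpace ℂ (Fin d), ‖ξ‖ = 1 →
      (inner ℂ ξ (Matrix.toEuclideanCLM (𝕜 := ℂ) M ξ) : ℂ) ∈ sector ω)
    (η : EuclideanSpace ℂ (Fin d)) :
    |(inner ℂ η (Matrix.toEuclideanCLM (𝕜 := ℂ) M η) : ℂ).im|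
      ≤ Real.tan ω * (inner ℂ η (Matrix.toEuclideanCLM (𝕜 := ℂ) M η) : ℂ).re := by
  rcases eq_or_ne η 0 with rfl | hη
  · simp
  have hnorm : (0:ℝ) < ‖η‖ := norm_pos_iff.2 hη
  set c : ℂ := ((‖η‖⁻¹ : ℝ) : ℂ) with hc
  have hu : ‖c • η‖ = 1 := by
    rw [norm_smul, hc, Complex.norm_real, Real.norm_eq_abs, abs_of_pos (by positivity)]
    field_simp
  have hsc : (inner ℂ (c • η) (Matrix.toEuclideanCLM (𝕜 := ℂ) M (c • η)) : ℂ)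
      = (((‖η‖⁻¹) ^ 2 : ℝ) : ℂ) * inner ℂ η (Matrix.toEuclideanCLM (𝕜 := ℂ) M η) := by
    rw [map_smul, inner_smul_left, inner_smul_right, hc, Complex.conj_ofReal]
    push_cast
    ring
  have hre0 : 0 < (inner ℂ (c • η) (Matrix.toEuclideanCLM (𝕜 := ℂ) M (c • η)) : ℂ).re := by
    have h := hcoer (c • η)
    rw [hu, one_pow, mul_one] at h
    exact lt_of_lt_of_le hm h
  have hkey := sector_bound ω hω.1 hω.2 _ (hN (c • η) hu) hre0
  rw [hsc, Complex.re_ofReal_mul, Complex.im_ofReal_mul, abs_mul,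
    abs_of_pos (show (0:ℝ) < (‖η‖⁻¹)^2 by positivity)] at hkey
  have hc2 : (0:ℝ) < (‖η‖⁻¹)^2 := by positivity
  rw [← mul_le_mul_iff_right₀ hc2]
  calc (‖η‖⁻¹)^2 * |(inner ℂ η (Matrix.toEuclideanCLM (𝕜 := ℂ) M η) : ℂ).im|
      ≤ Real.tan ω * ((‖η‖⁻¹)^2 * (inner ℂ η (Matrix.toEuclideanCLM (𝕜 := ℂ) M η) : ℂ).re) :=
        hkey
    _ = (‖η‖⁻¹)^2 * (Real.tan ω * (inner ℂ η (Matrix.toEuclideanCLM (𝕜 := ℂ) M η) : ℂ).re) := by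
        ring

set_option maxHeartbeats 2000000 in
theorem stmt15 {d : ℕ} (M : Matrix (Fin d) (Fin d) ℂ) (m ω p αp : ℝ)
    (hm : 0 < m)
    (hcoer : ∀ ξ : EuclideanSpace ℂ (Fin d),
      m * ‖ξ‖ ^ 2 ≤ (inner ℂ ξ (Matrix.toEuclideanCLM (𝕜 := ℂ) M ξ) : ℂ).re)
    (hω : ω ∈ Set.Ico 0 (Real.pi / 2))
    (hN : ∀ ξ : EuclideanSpace ℂ (Fin d), ‖ξ‖ = 1 →
      (inner ℂ ξ (Matrix.toEuclideanCLM (𝕜 := ℂ) M ξ) : ℂ) ∈ sector ω)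
    (hp : 2 ≤ p)
    (hpos : 0 < m - sigmaP p * ‖Matrix.toEuclideanCLM (𝕜 := ℝ) (M.map Complex.im)‖)
    (hαp : αp ∈ Set.Ico 0 (Real.pi / 2))
    (htan : Real.tan αp =
      (Real.tan ω * m + sigmaP p * ‖Matrix.toEuclideanCLM (𝕜 := ℝ) (M.map Complex.re)‖) /
        (m - sigmaP p * ‖Matrix.toEuclideanCLM (𝕜 := ℝ) (M.map Complex.im)‖)) :
    ∀ ξ : EuclideanSpace ℂ (Fin d), ‖ξ‖ = 1 →
      (inner ℂ (Jp p ξ) (Matrix.toEuclideanCLM (𝕜 := ℂ) M ξ) : ℂ) ∈ sector αp := by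
  intro ξ hξ
  have hπ := Real.pi_pos
  have hp0 : (0:ℝ) < p := by linarith only [hp]
  have htω : 0 ≤ Real.tan ω :=
    Real.tan_nonneg_of_nonneg_of_le_pi_div_two hω.1 (le_of_lt hω.2)
  have hσ : 0 ≤ sigmaP p := by
    rw [sigmaP]
    have : (0:ℝ) ≤ Real.sqrt (p - 1) := Real.sqrt_nonneg _
    have : (0:ℝ) ≤ p - 2 := by linarith only [hp]
    positivity
  have hnA : (0:ℝ) ≤ ‖Matrix.toEuclideanCLM (𝕜 := ℝ) (M.map Complex.re)‖ := norm_nonneg _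
  have hnB : (0:ℝ) ≤ ‖Matrix.toEuclideanCLM (𝕜 := ℝ) (M.map Complex.im)‖ := norm_nonneg _
  have hNall' : ∀ η : EuclideanSpace ℂ (Fin d),
      |(inner ℂ η (Matrix.toEuclideanCLM (𝕜 := ℂ) M η) : ℂ).im|
        ≤ Real.tan ω * (inner ℂ η (Matrix.toEuclideanCLM (𝕜 := ℂ) M η) : ℂ).re :=
    numrange_bound M m ω hm hcoer hω hN
  -- abbreviations
  have hF1 := inner_Jp p hp ξ (Matrix.toEuclideanCLM (𝕜 := ℂ) M ξ)
  -- real and imaginary parts of the decomposition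
  have hzre : (inner ℂ (Jp p ξ) (Matrix.toEuclideanCLM (𝕜 := ℂ) M ξ) : ℂ).re
      = (2/p) * (inner ℂ ξ (Matrix.toEuclideanCLM (𝕜 := ℂ) M ξ) : ℂ).re
        + (2*(p-2)/p) * ((inner ℝ (embR fun i => (ξ i).re)
            (Matrix.toEuclideanCLM (𝕜 := ℝ) (M.map Complex.re) (embR fun i => (ξ i).re)) : ℝ)
          - (inner ℝ (embR fun i => (ξ i).re)
            (Matrix.toEuclideanCLM (𝕜 := ℝ) (M.map Complex.im) (embR fun i => (ξ i).im)) : ℝ)) := by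
    rw [← re_inner_real_left M (fun i => (ξ i).re) ξ]
    rw [hF1, Complex.add_re, Complex.re_ofReal_mul, Complex.re_ofReal_mul]
  have hzim : (inner ℂ (Jp p ξ) (Matrix.toEuclideanCLM (𝕜 := ℂ) M ξ) : ℂ).im
      = (2/p) * (inner ℂ ξ (Matrix.toEuclideanCLM (𝕜 := ℂ) M ξ) : ℂ).im
        + (2*(p-2)/p) * ((inner ℝ (embR fun i => (ξ i).re)
            (Matrix.toEuclideanCLM (𝕜 := ℝ) (M.map Complex.im) (embR fun i => (ξ i).re)) : ℝ)
          + (inner ℝ (embR fun i => (ξ i).re)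
            (Matrix.toEuclideanCLM (𝕜 := ℝ) (M.map Complex.re) (embR fun i => (ξ i).im)) : ℝ)) := by
    rw [← im_inner_real_left M (fun i => (ξ i).re) ξ]
    rw [hF1, Complex.add_im, Complex.im_ofReal_mul, Complex.im_ofReal_mul]
  -- basic facts about w
  have hF2 : m ≤ (inner ℂ ξ (Matrix.toEuclideanCLM (𝕜 := ℂ) M ξ) : ℂ).re := by
    have := hcoer ξ
    rw [hξ] at this
    simpa using this
  have hF3 := hNall' ξ
  -- facts about the real vector a
  have hq1low : m * ‖embR (fun i => (ξ i).re)‖ ^ 2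
      ≤ (inner ℝ (embR fun i => (ξ i).re)
          (Matrix.toEuclideanCLM (𝕜 := ℝ) (M.map Complex.re) (embR fun i => (ξ i).re)) : ℝ) := by
    have h := hcoer (embC fun i => (ξ i).re)
    rw [norm_embed, re_inner_embed] at h
    exact h
  have hq3bound : |(inner ℝ (embR fun i => (ξ i).re)
        (Matrix.toEuclideanCLM (𝕜 := ℝ) (M.map Complex.im) (embR fun i => (ξ i).re)) : ℝ)|
      ≤ Real.tan ω * (inner ℝ (embR fun i => (ξ i).re)
        (Matrix.toEuclideanCLM (𝕜 := ℝ) (M.map Complex.re) (embR fun i => (ξ i).re)) : ℝ) := by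
    have h := hNall' (embC fun i => (ξ i).re)
    rw [re_inner_embed, im_inner_embed] at h
    exact h
  -- norms of a, b
  have hrs : ‖embR (fun i => (ξ i).re)‖ ^ 2 + ‖embR (fun i => (ξ i).im)‖ ^ 2 = 1 := by
    have h2 := euclid_norm_sq_c ξ
    rw [hξ, one_pow] at h2
    rw [euclid_norm_sq, euclid_norm_sq, ← Finset.sum_add_distrib, h2]
    exact Finset.sum_congr rfl fun i _ => by simp [embR, WithLp.equiv_symm_apply, PiLp.toLp_apply]
  -- operator norm bounds
  have hq2bound : |(inner ℝ (embR fun i => (ξ i).re)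
        (Matrix.toEuclideanCLM (𝕜 := ℝ) (M.map Complex.im) (embR fun i => (ξ i).im)) : ℝ)|
      ≤ ‖Matrix.toEuclideanCLM (𝕜 := ℝ) (M.map Complex.im)‖
        * (‖embR (fun i => (ξ i).re)‖ * ‖embR (fun i => (ξ i).im)‖) := by
    calc |(inner ℝ (embR fun i => (ξ i).re)
          (Matrix.toEuclideanCLM (𝕜 := ℝ) (M.map Complex.im) (embR fun i => (ξ i).im)) : ℝ)|
        ≤ ‖embR (fun i => (ξ i).re)‖
            * ‖Matrix.toEuclideanCLM (𝕜 := ℝ) (M.map Complex.im) (embR fun i => (ξ i).im)‖ :=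
          abs_real_inner_le_norm _ _
      _ ≤ ‖embR (fun i => (ξ i).re)‖ * (‖Matrix.toEuclideanCLM (𝕜 := ℝ) (M.map Complex.im)‖
            * ‖embR (fun i => (ξ i).im)‖) :=
          mul_le_mul_of_nonneg_left
            ((Matrix.toEuclideanCLM (𝕜 := ℝ) (M.map Complex.im)).le_opNorm _) (norm_nonneg _)
      _ = ‖Matrix.toEuclideanCLM (𝕜 := ℝ) (M.map Complex.im)‖
            * (‖embR (fun i => (ξ i).re)‖ * ‖embR (fun i => (ξ i).im)‖) := by ring
  have hq4bound : |(inner ℝ (embR fun i => (ξ i).re)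
        (Matrix.toEuclideanCLM (𝕜 := ℝ) (M.map Complex.re) (embR fun i => (ξ i).im)) : ℝ)|
      ≤ ‖Matrix.toEuclideanCLM (𝕜 := ℝ) (M.map Complex.re)‖
        * (‖embR (fun i => (ξ i).re)‖ * ‖embR (fun i => (ξ i).im)‖) := by
    calc |(inner ℝ (embR fun i => (ξ i).re)
          (Matrix.toEuclideanCLM (𝕜 := ℝ) (M.map Complex.re) (embR fun i => (ξ i).im)) : ℝ)|
        ≤ ‖embR (fun i => (ξ i).re)‖
            * ‖Matrix.toEuclideanCLM (𝕜 := ℝ) (M.map Complex.re) (embR fun i => (ξ i).im)‖ :=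
          abs_real_inner_le_norm _ _
      _ ≤ ‖embR (fun i => (ξ i).re)‖ * (‖Matrix.toEuclideanCLM (𝕜 := ℝ) (M.map Complex.re)‖
            * ‖embR (fun i => (ξ i).im)‖) :=
          mul_le_mul_of_nonneg_left
            ((Matrix.toEuclideanCLM (𝕜 := ℝ) (M.map Complex.re)).le_opNorm _) (norm_nonneg _)
      _ = ‖Matrix.toEuclideanCLM (𝕜 := ℝ) (M.map Complex.re)‖
            * (‖embR (fun i => (ξ i).re)‖ * ‖embR (fun i => (ξ i).im)‖) := by ring
  -- now pure real arithmetic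
  set nA := ‖Matrix.toEuclideanCLM (𝕜 := ℝ) (M.map Complex.re)‖ with hnAdef
  set nB := ‖Matrix.toEuclideanCLM (𝕜 := ℝ) (M.map Complex.im)‖ with hnBdef
  set r := ‖embR (fun i => (ξ i : ℂ).re)‖ with hrdef
  set s := ‖embR (fun i => (ξ i : ℂ).im)‖ with hsdef
  set q1 := (inner ℝ (embR fun i => (ξ i).re)
      (Matrix.toEuclideanCLM (𝕜 := ℝ) (M.map Complex.re) (embR fun i => (ξ i).re)) : ℝ) with hq1def
  set q2 := (inner ℝ (embR fun i => (ξ i).re)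
      (Matrix.toEuclideanCLM (𝕜 := ℝ) (M.map Complex.im) (embR fun i => (ξ i).im)) : ℝ) with hq2def
  set q3 := (inner ℝ (embR fun i => (ξ i).re)
      (Matrix.toEuclideanCLM (𝕜 := ℝ) (M.map Complex.im) (embR fun i => (ξ i).re)) : ℝ) with hq3def
  set q4 := (inner ℝ (embR fun i => (ξ i).re)
      (Matrix.toEuclideanCLM (𝕜 := ℝ) (M.map Complex.re) (embR fun i => (ξ i).im)) : ℝ) with hq4def
  set RW := (inner ℂ ξ (Matrix.toEuclideanCLM (𝕜 := ℂ) M ξ) : ℂ).re with hRWdef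
  set IW := (inner ℂ ξ (Matrix.toEuclideanCLM (𝕜 := ℂ) M ξ) : ℂ).im with hIWdef
  set ZR := (inner ℂ (Jp p ξ) (Matrix.toEuclideanCLM (𝕜 := ℂ) M ξ) : ℂ).re with hZRdef
  set ZI := (inner ℂ (Jp p ξ) (Matrix.toEuclideanCLM (𝕜 := ℂ) M ξ) : ℂ).im with hZIdef
  set σ := sigmaP p with hσdef
  set tω := Real.tan ω with htωdef
  set tα := Real.tan αp with htαdef
  have hrnn : 0 ≤ r := norm_nonneg _
  have hsnn : 0 ≤ s := norm_nonneg _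
  -- Young's inequality
  set sq := Real.sqrt (p - 1) with hsqdef
  have hsq1 : 1 ≤ sq := Real.one_le_sqrt.2 (by linarith only [hp])
  have hsq2 : sq ^ 2 = p - 1 := Real.sq_sqrt (by linarith only [hp])
  set Y : ℝ := ((p-1) * r^2 + s^2) / p with hYdef
  have hYpos : 0 < Y := by
    rw [hYdef]
    have h1 : 1 ≤ (p-1) * r^2 + s^2 := by nlinarith only [sq_nonneg r, hrs, hp]
    positivity
  have hF7 : 2 * Y = 2/p + (2*(p-2)/p) * r^2 := by
    rw [hYdef]
    field_simp
    linarith only [hrs]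
  have hYoung : (2*(p-2)/p) * (r*s) ≤ 2 * σ * Y := by
    have key : (p-2) * (2 * sq * (r*s)) ≤ (p-2) * ((p-1) * r^2 + s^2) := by
      have h2 : (0:ℝ) ≤ p - 2 := by linarith only [hp]
      have h3 : 2 * sq * (r*s) ≤ sq^2 * r^2 + s^2 := by
        linarith only [sq_nonneg (sq * r - s)]
      have h4 : (p-2) * (sq^2 * r^2 + s^2) = (p-2) * ((p-1) * r^2 + s^2) := by
        linear_combination ((p-2) * r^2) * hsq2
      exact le_trans (mul_le_mul_of_nonneg_left h3 h2) (le_of_eq h4)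
    have hsqp : (0:ℝ) < sq := by linarith only [hsq1]
    have hfin : 2 * σ * Y - (2*(p-2)/p) * (r*s)
        = ((p-2) * ((p-1) * r^2 + s^2) - (p-2) * (2 * sq * (r*s))) / (sq * p) := by
      rw [hσdef, sigmaP, ← hsqdef, hYdef]
      field_simp
    have := div_nonneg (sub_nonneg.2 key) (le_of_lt (show (0:ℝ) < sq * p by positivity))
    linarith only [hfin, this]
  -- assembling the inequalities
  have hcnn : (0:ℝ) ≤ 2/p := by positivity
  have htnn : (0:ℝ) ≤ 2*(p-2)/p := by
    have : (0:ℝ) ≤ p - 2 := by linarith only [hp]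
    positivity
  have hwre : 0 < RW := lt_of_lt_of_le hm hF2
  have hq4b : (2*(p-2)/p) * |q4| ≤ (2*(p-2)/p) * (nA * (r*s)) :=
    mul_le_mul_of_nonneg_left hq4bound htnn
  have hq3b : (2*(p-2)/p) * |q3| ≤ (2*(p-2)/p) * (tω * q1) :=
    mul_le_mul_of_nonneg_left hq3bound htnn
  have hq2b : (2*(p-2)/p) * |q2| ≤ (2*(p-2)/p) * (nB * (r*s)) :=
    mul_le_mul_of_nonneg_left hq2bound htnn
  have hIWb : (2/p) * |IW| ≤ (2/p) * (tω * RW) := mul_le_mul_of_nonneg_left hF3 hcnn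
  have hq1b : (2*(p-2)/p) * (m * r^2) ≤ (2*(p-2)/p) * q1 :=
    mul_le_mul_of_nonneg_left hq1low htnn
  have hRWb : (2/p) * m ≤ (2/p) * RW := mul_le_mul_of_nonneg_left hF2 hcnn
  have hYoungB : nB * ((2*(p-2)/p) * (r*s)) ≤ nB * (2 * σ * Y) :=
    mul_le_mul_of_nonneg_left hYoung hnB
  have hYoungA : nA * ((2*(p-2)/p) * (r*s)) ≤ nA * (2 * σ * Y) :=
    mul_le_mul_of_nonneg_left hYoung hnA
  have hYoungTB : (tω * nB) * ((2*(p-2)/p) * (r*s)) ≤ (tω * nB) * (2 * σ * Y) :=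
    mul_le_mul_of_nonneg_left hYoung (mul_nonneg htω hnB)
  have hF7m : m * (2 * Y) = m * (2/p) + m * ((2*(p-2)/p) * r^2) := by
    linear_combination m * hF7
  -- lower bound for ZR
  have hG1 : 2 * Y * (m - σ * nB) ≤ ZR := by
    have h1 : (2*(p-2)/p) * q2 ≤ (2*(p-2)/p) * |q2| :=
      mul_le_mul_of_nonneg_left (le_abs_self _) htnn
    linarith only [hzre, hRWb, hq1b, h1, hq2b, hYoungB, hF7m]
  have hZRpos : 0 < ZR :=
    lt_of_lt_of_le (mul_pos (by linarith only [hYpos]) hpos) hG1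
  -- tangent relation
  have htanD : tα * (m - σ * nB) = tω * m + σ * nA := by
    rw [htan]
    field_simp
  have hP6 : (tα - tω) * (m - σ * nB) = σ * (nA + tω * nB) := by
    linear_combination htanD
  have h0 : 0 ≤ σ * (nA + tω * nB) :=
    mul_nonneg hσ (add_nonneg hnA (mul_nonneg htω hnB))
  have hP7 : tω ≤ tα := by
    by_contra hcon
    push_neg at hcon
    have hlt : (tα - tω) * (m - σ * nB) < 0 :=
      mul_neg_of_neg_of_pos (by linarith only [hcon]) hpos
    linarith only [hP6, h0, hlt]
  have hP8 : 2 * Y * (σ * (nA + tω * nB)) ≤ (tα - tω) * ZR := by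
    have h1 := mul_le_mul_of_nonneg_left hG1 (sub_nonneg.2 hP7)
    have heq : (tα - tω) * (2 * Y * (m - σ * nB)) = 2 * Y * (σ * (nA + tω * nB)) := by
      linear_combination (2 * Y) * hP6
    linarith only [h1, heq]
  -- relation used for both imaginary bounds
  have hQ1 : tω * ((2/p) * RW) + tω * ((2*(p-2)/p) * q1)
      = tω * ZR + tω * ((2*(p-2)/p) * q2) := by
    linear_combination (-tω) * hzre
  have hQ2 : tω * ((2*(p-2)/p) * q2) ≤ tω * ((2*(p-2)/p) * |q2|) :=
    mul_le_mul_of_nonneg_left (mul_le_mul_of_nonneg_left (le_abs_self _) htnn) htω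
  have hQ3 : tω * ((2*(p-2)/p) * |q2|) ≤ tω * ((2*(p-2)/p) * (nB * (r*s))) :=
    mul_le_mul_of_nonneg_left hq2b htω
  -- final bound on |ZI|
  have hZIbound : |ZI| ≤ tα * ZR := by
    have e1 : (2/p) * IW ≤ (2/p) * |IW| := mul_le_mul_of_nonneg_left (le_abs_self _) hcnn
    have e1' : (2/p) * (-(|IW|)) ≤ (2/p) * IW :=
      mul_le_mul_of_nonneg_left (neg_abs_le _) hcnn
    have e3 : (2*(p-2)/p) * q3 ≤ (2*(p-2)/p) * |q3| :=
      mul_le_mul_of_nonneg_left (le_abs_self _) htnn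
    have e3' : (2*(p-2)/p) * (-(|q3|)) ≤ (2*(p-2)/p) * q3 :=
      mul_le_mul_of_nonneg_left (neg_abs_le _) htnn
    have e4 : (2*(p-2)/p) * q4 ≤ (2*(p-2)/p) * |q4| :=
      mul_le_mul_of_nonneg_left (le_abs_self _) htnn
    have e4' : (2*(p-2)/p) * (-(|q4|)) ≤ (2*(p-2)/p) * q4 :=
      mul_le_mul_of_nonneg_left (neg_abs_le _) htnn
    rw [abs_le]
    constructor
    · linarith only [hzim, e1', e3', e4', hIWb, hq3b, hq4b, hQ1, hQ2, hQ3, hYoungTB, hYoungA, hP8]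
    · linarith only [hzim, e1, e3, e4, hIWb, hq3b, hq4b, hQ1, hQ2, hQ3, hYoungTB, hYoungA, hP8]
  exact mem_sector_of αp hαp.1 hαp.2 _ hZRpos hZIbound

end
end

section
/- A matrix M ∈ L(ℂ^d) is p-elliptic for all p ∈ (1,∞) if and only if M has real entries (i.e., Im M = 0) and M is elliptic, in the sense that Δ_p(M) = min_{|ξ|=1} Re(Mξ, J_p(ξ)) > 0 for every p ∈ (1,∞) iff Im M = 0 and Re(Mξ,ξ) > 0 for all nonzero ξ. -/
noncomputable section

open Complex

/-- The p-ellipticity constant `Δ_p(M) = min_{|ξ|=1} Re(Mξ, J_p(ξ))`. -/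
def DeltaP {d : ℕ} (p : ℝ) (M : Matrix (Fin d) (Fin d) ℂ) : ℝ :=
  sInf {r : ℝ | ∃ ξ : EuclideanSpace ℂ (Fin d), ‖ξ‖ = 1 ∧
    r = (inner ℂ (Jp p ξ) (Matrix.toEuclideanCLM (𝕜 := ℂ) M ξ) : ℂ).re}

/-- auxiliary: the complex vector with real part `a` and imaginary part `b`. -/
def vecC {d : ℕ} (a b : Fin d → ℝ) : EuclideanSpace ℂ (Fin d) :=
  (WithLp.equiv 2 (Fin d → ℂ)).symm fun i => (a i : ℂ) + Complex.I * (b i : ℂ)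

def QA {d : ℕ} (M : Matrix (Fin d) (Fin d) ℂ) (a b : Fin d → ℝ) : ℝ :=
  ∑ i, ∑ j, a i * ((M i j).re * a j - (M i j).im * b j)

def QB {d : ℕ} (M : Matrix (Fin d) (Fin d) ℂ) (a b : Fin d → ℝ) : ℝ :=
  ∑ i, ∑ j, b i * ((M i j).re * b j + (M i j).im * a j)

lemma vecC_apply {d : ℕ} (a b : Fin d → ℝ) (i : Fin d) :
    (vecC a b) i = (a i : ℂ) + Complex.I * (b i : ℂ) := rfl

lemma Jp_apply {d : ℕ} (p : ℝ) (ξ : EuclideanSpace ℂ (Fin d)) (i : Fin d) :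
    (Jp p ξ) i = ((2 / (p / (p - 1)) * (ξ i).re : ℝ) : ℂ)
      + Complex.I * ((2 / p * (ξ i).im : ℝ) : ℂ) := rfl

lemma CLM_apply {d : ℕ} (M : Matrix (Fin d) (Fin d) ℂ) (x : EuclideanSpace ℂ (Fin d))
    (i : Fin d) : (Matrix.toEuclideanCLM (𝕜 := ℂ) M x) i = ∑ j, M i j * x j := rfl

lemma F_formula {d : ℕ} (p : ℝ) (M : Matrix (Fin d) (Fin d) ℂ) (a b : Fin d → ℝ) :
    (inner ℂ (Jp p (vecC a b)) (Matrix.toEuclideanCLM (𝕜 := ℂ) M (vecC a b)) : ℂ).re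
      = 2 / (p / (p - 1)) * QA M a b + 2 / p * QB M a b := by
  have h1 : (inner ℂ (Jp p (vecC a b)) (Matrix.toEuclideanCLM (𝕜 := ℂ) M (vecC a b)) : ℂ)
      = ∑ i, (starRingEnd ℂ) ((Jp p (vecC a b)) i) * ∑ j, M i j * (vecC a b) j := by
    simp [PiLp.inner_apply, RCLike.inner_apply, CLM_apply, mul_comm]
  rw [h1, Complex.re_sum, QA, QB, Finset.mul_sum, Finset.mul_sum, ← Finset.sum_add_distrib]
  refine Finset.sum_congr rfl fun i _ => ?_
  simp only [Jp_apply, vecC_apply, Complex.mul_re, Complex.conj_re, Complex.conj_im,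
    Complex.add_re, Complex.add_im, Complex.mul_im, Complex.I_re, Complex.I_im,
    Complex.ofReal_re, Complex.ofReal_im, Complex.re_sum, Complex.im_sum,
    mul_zero, zero_mul, one_mul, mul_one, zero_add, add_zero, sub_zero, zero_sub]
  rw [← Finset.mul_sum, ← Finset.mul_sum]
  ring


lemma Jp_two {d : ℕ} (ξ : EuclideanSpace ℂ (Fin d)) : Jp 2 ξ = ξ := by
  ext i
  rw [Jp_apply]
  norm_num
  simp [Complex.ext_iff]

lemma vecC_re_im {d : ℕ} (ξ : EuclideanSpace ℂ (Fin d)) :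
    vecC (fun i => (ξ i).re) (fun i => (ξ i).im) = ξ := by
  ext i
  rw [vecC_apply]
  simp [Complex.ext_iff]

lemma smul_vecC {d : ℕ} (t : ℝ) (a b : Fin d → ℝ) :
    vecC (fun i => t * a i) (fun i => t * b i) = t • vecC a b := by
  ext i
  have : (t • vecC a b) i = t • (vecC a b i) := rfl
  rw [vecC_apply, this, vecC_apply, Complex.real_smul]
  push_cast
  ring

lemma QA_smul {d : ℕ} (M : Matrix (Fin d) (Fin d) ℂ) (t : ℝ) (a b : Fin d → ℝ) :
    QA M (fun i => t * a i) (fun i => t * b i) = t ^ 2 * QA M a b := by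
  rw [QA, QA, Finset.mul_sum]
  refine Finset.sum_congr rfl fun i _ => ?_
  rw [Finset.mul_sum]
  exact Finset.sum_congr rfl fun j _ => by ring

lemma QB_smul {d : ℕ} (M : Matrix (Fin d) (Fin d) ℂ) (t : ℝ) (a b : Fin d → ℝ) :
    QB M (fun i => t * a i) (fun i => t * b i) = t ^ 2 * QB M a b := by
  rw [QB, QB, Finset.mul_sum]
  refine Finset.sum_congr rfl fun i _ => ?_
  rw [Finset.mul_sum]
  exact Finset.sum_congr rfl fun j _ => by ring

/-- If `Δ_p(M) > 0` then the form is positive on every nonzero vector. -/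
lemma elem_pos {d : ℕ} {p : ℝ} {M : Matrix (Fin d) (Fin d) ℂ}
    (h : 0 < DeltaP p M) (ξ : EuclideanSpace ℂ (Fin d)) (hξ : ξ ≠ 0) :
    0 < (inner ℂ (Jp p ξ) (Matrix.toEuclideanCLM (𝕜 := ℂ) M ξ) : ℂ).re := by
  set S := {r : ℝ | ∃ ξ : EuclideanSpace ℂ (Fin d), ‖ξ‖ = 1 ∧
    r = (inner ℂ (Jp p ξ) (Matrix.toEuclideanCLM (𝕜 := ℂ) M ξ) : ℂ).re} with hS
  have hbdd : BddBelow S := by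
    by_contra hb
    rw [DeltaP, ← hS, Real.sInf_of_not_bddBelow hb] at h
    exact lt_irrefl 0 h
  set t : ℝ := ‖ξ‖⁻¹ with ht
  have htpos : 0 < t := inv_pos.2 (norm_pos_iff.2 hξ)
  set u : EuclideanSpace ℂ (Fin d) := t • ξ with hu
  have hun : ‖u‖ = 1 := norm_smul_inv_norm hξ
  have hmem : (inner ℂ (Jp p u) (Matrix.toEuclideanCLM (𝕜 := ℂ) M u) : ℂ).re ∈ S :=
    ⟨u, hun, rfl⟩
  have hge : 0 < (inner ℂ (Jp p u) (Matrix.toEuclideanCLM (𝕜 := ℂ) M u) : ℂ).re :=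
    lt_of_lt_of_le h (csInf_le hbdd hmem)
  set a : Fin d → ℝ := fun i => (ξ i).re with ha
  set b : Fin d → ℝ := fun i => (ξ i).im with hb2
  have hξv : ξ = vecC a b := (vecC_re_im ξ).symm
  have huv : u = vecC (fun i => t * a i) (fun i => t * b i) := by
    rw [hu, hξv, smul_vecC]
  rw [huv, F_formula, QA_smul, QB_smul] at hge
  rw [hξv, F_formula]
  nlinarith [sq_nonneg t]

theorem stmt17 {d : ℕ} (hd : 0 < d) (M : Matrix (Fin d) (Fin d) ℂ) :
    (∀ p : ℝ, 1 < p → 0 < DeltaP p M) ↔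
      (M.map Complex.im = 0 ∧
        ∀ ξ : EuclideanSpace ℂ (Fin d), ξ ≠ 0 →
          0 < (inner ℂ ξ (Matrix.toEuclideanCLM (𝕜 := ℂ) M ξ) : ℂ).re) := by
  constructor
  · intro h
    have h2 := h 2 (by norm_num)
    have hell : ∀ ξ : EuclideanSpace ℂ (Fin d), ξ ≠ 0 →
        0 < (inner ℂ ξ (Matrix.toEuclideanCLM (𝕜 := ℂ) M ξ) : ℂ).re := by
      intro ξ hξ
      have := elem_pos h2 ξ hξ
      rwa [Jp_two] at this
    refine ⟨?_, hell⟩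
    ext i0 j0
    simp only [Matrix.map_apply, Matrix.zero_apply]
    by_contra hb
    set A0 := (M i0 i0).re with hA0
    set s : ℝ := (|A0| + 1) / (M i0 j0).im with hs
    set a : Fin d → ℝ := Pi.single i0 1 with ha
    set b : Fin d → ℝ := Pi.single j0 s with hbdef
    have hsb : (M i0 j0).im * s = |A0| + 1 := by
      rw [hs]; field_simp
    have hQA : QA M a b = A0 - (|A0| + 1) := by
      rw [QA]
      simp only [ha, hbdef, Pi.single_apply, mul_sub, mul_ite, ite_mul, mul_zero, zero_mul,
        mul_one, Finset.sum_sub_distrib, Finset.sum_ite_eq, Finset.sum_ite_eq',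
        Finset.mem_univ, if_true]
      linarith [hsb]
    set Y := QB M a b with hYdef
    set p : ℝ := max 2 (2 * (|Y| + 1)) with hp
    have hp2 : (2:ℝ) ≤ p := le_max_left _ _
    have hpY : 2 * (|Y| + 1) ≤ p := le_max_right _ _
    have hp1 : (1:ℝ) < p := lt_of_lt_of_le one_lt_two hp2
    have hp0 : (0:ℝ) < p := by linarith
    have hξne : vecC a b ≠ 0 := by
      intro h0
      have h1 : (vecC a b) i0 = 0 := by rw [h0]; rfl
      rw [vecC_apply] at h1
      have h2' := congrArg Complex.re h1
      simp [ha, Pi.single_apply] at h2'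
    have hpos := elem_pos (h p hp1) (vecC a b) hξne
    rw [F_formula, hQA, ← hYdef] at hpos
    have hc1 : (1:ℝ) ≤ 2 / (p / (p - 1)) := by
      rw [div_div_eq_mul_div, le_div_iff₀ hp0]
      linarith
    have hc1X : 2 / (p / (p - 1)) * (A0 - (|A0| + 1)) ≤ -1 := by
      have hXn : A0 - (|A0| + 1) ≤ -1 := by
        have := le_abs_self A0; linarith
      calc 2 / (p / (p - 1)) * (A0 - (|A0| + 1)) ≤ 1 * (A0 - (|A0| + 1)) :=
        mul_le_mul_of_nonpos_right hc1 (by linarith)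
      _ ≤ -1 := by linarith
    have hc2Y : 2 / p * Y < 1 := by
      rw [div_mul_eq_mul_div, div_lt_one hp0]
      have h1 := le_abs_self Y
      have h2' := abs_nonneg Y
      linarith
    linarith
  · rintro ⟨hIm, hell⟩ p hp1
    have hB : ∀ i j, (M i j).im = 0 := by
      intro i j
      have := Matrix.ext_iff.mpr hIm i j
      simpa using this
    have hQApos : ∀ a : Fin d → ℝ, a ≠ 0 → 0 < QA M a 0 := by
      intro a hA
      have hne : vecC a 0 ≠ 0 := by
        intro h0
        apply hA
        funext i
        have h1 : (vecC a 0) i = 0 := by rw [h0]; rfl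
        rw [vecC_apply] at h1
        have := congrArg Complex.re h1
        simpa using this
      have hp := hell (vecC a 0) hne
      have hF := F_formula 2 M a 0
      rw [Jp_two] at hF
      rw [hF] at hp
      have hQB0 : QB M a 0 = 0 := by simp [QB]
      rw [hQB0] at hp
      norm_num at hp
      exact hp
    have hQBpos : ∀ b : Fin d → ℝ, b ≠ 0 → 0 < QB M 0 b := by
      intro b hA
      have hne : vecC 0 b ≠ 0 := by
        intro h0
        apply hA
        funext i
        have h1 : (vecC 0 b) i = 0 := by rw [h0]; rfl
        rw [vecC_apply] at h1
        have := congrArg Complex.im h1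
        simpa using this
      have hp := hell (vecC 0 b) hne
      have hF := F_formula 2 M 0 b
      rw [Jp_two] at hF
      rw [hF] at hp
      have hQA0 : QA M 0 b = 0 := by simp [QA]
      rw [hQA0] at hp
      norm_num at hp
      exact hp
    have hQAeq : ∀ a b : Fin d → ℝ, QA M a b = QA M a 0 := by
      intro a b; simp [QA, hB]
    have hQBeq : ∀ a b : Fin d → ℝ, QB M a b = QB M 0 b := by
      intro a b; simp [QB, hB]
    have hQAnn : ∀ a : Fin d → ℝ, 0 ≤ QA M a 0 := by
      intro a
      rcases eq_or_ne a 0 with rfl | hne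
      · simp [QA]
      · exact (hQApos a hne).le
    have hQBnn : ∀ b : Fin d → ℝ, 0 ≤ QB M 0 b := by
      intro b
      rcases eq_or_ne b 0 with rfl | hne
      · simp [QB]
      · exact (hQBpos b hne).le
    have hc1 : 0 < 2 / (p / (p - 1)) := by
      have : 0 < p / (p - 1) := div_pos (by linarith) (by linarith)
      positivity
    have hc2 : 0 < 2 / p := by
      have : (0:ℝ) < p := by linarith
      positivity
    have hFpos : ∀ ξ : EuclideanSpace ℂ (Fin d), ‖ξ‖ = 1 →
        0 < (inner ℂ (Jp p ξ) (Matrix.toEuclideanCLM (𝕜 := ℂ) M ξ) : ℂ).re := by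
      intro ξ hξn
      have hξ0 : ξ ≠ 0 := by
        intro h0; rw [h0] at hξn; simp at hξn
      set a : Fin d → ℝ := fun i => (ξ i).re with ha
      set b : Fin d → ℝ := fun i => (ξ i).im with hbb
      have hv : ξ = vecC a b := (vecC_re_im ξ).symm
      rw [hv, F_formula, hQAeq, hQBeq]
      have hab : a ≠ 0 ∨ b ≠ 0 := by
        by_contra hc
        push_neg at hc
        obtain ⟨h1, h2⟩ := hc
        apply hξ0
        rw [hv, h1, h2]
        ext i
        rw [vecC_apply]
        simp
      rcases hab with hA | hA
      · have t1 := mul_pos hc1 (hQApos a hA)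
        have t2 := mul_nonneg hc2.le (hQBnn b)
        linarith
      · have t1 := mul_nonneg hc1.le (hQAnn a)
        have t2 := mul_pos hc2 (hQBpos b hA)
        linarith
    have hcoord : ∀ i, Continuous fun ξ : EuclideanSpace ℂ (Fin d) => ξ i :=
      fun i => (continuous_apply i).comp (PiLp.continuous_ofLp 2 (fun _ : Fin d => ℂ))
    have hJ : Continuous (Jp (d := d) p) := by
      apply (PiLp.continuous_toLp 2 (fun _ : Fin d => ℂ)).comp
      apply continuous_pi
      intro i
      exact (Complex.continuous_ofReal.comp
          (continuous_const.mul (Complex.continuous_re.comp (hcoord i)))).add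
        (continuous_const.mul (Complex.continuous_ofReal.comp
          (continuous_const.mul (Complex.continuous_im.comp (hcoord i)))))
    have hcont : Continuous fun ξ : EuclideanSpace ℂ (Fin d) =>
        (inner ℂ (Jp p ξ) (Matrix.toEuclideanCLM (𝕜 := ℂ) M ξ) : ℂ).re :=
      Complex.continuous_re.comp
        (Continuous.inner hJ (Matrix.toEuclideanCLM (𝕜 := ℂ) M).continuous)
    have hset : {r : ℝ | ∃ ξ : EuclideanSpace ℂ (Fin d), ‖ξ‖ = 1 ∧
        r = (inner ℂ (Jp p ξ) (Matrix.toEuclideanCLM (𝕜 := ℂ) M ξ) : ℂ).re}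
        = (fun ξ : EuclideanSpace ℂ (Fin d) =>
            (inner ℂ (Jp p ξ) (Matrix.toEuclideanCLM (𝕜 := ℂ) M ξ) : ℂ).re) ''
          Metric.sphere 0 1 := by
      ext r
      simp [Set.mem_image, mem_sphere_zero_iff_norm, eq_comm]
    rw [DeltaP, hset]
    have hK : IsCompact ((fun ξ : EuclideanSpace ℂ (Fin d) =>
        (inner ℂ (Jp p ξ) (Matrix.toEuclideanCLM (𝕜 := ℂ) M ξ) : ℂ).re) ''
          Metric.sphere 0 1) :=
      (isCompact_sphere (0 : EuclideanSpace ℂ (Fin d)) 1).image hcont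
    have hne : ((fun ξ : EuclideanSpace ℂ (Fin d) =>
        (inner ℂ (Jp p ξ) (Matrix.toEuclideanCLM (𝕜 := ℂ) M ξ) : ℂ).re) ''
          Metric.sphere 0 1).Nonempty := by
      have hx : (EuclideanSpace.single (⟨0, hd⟩ : Fin d) (1:ℂ)) ∈
          Metric.sphere (0 : EuclideanSpace ℂ (Fin d)) 1 := by
        rw [mem_sphere_zero_iff_norm]
        simp [EuclideanSpace.norm_single]
      exact ⟨_, Set.mem_image_of_mem _ hx⟩
    obtain ⟨ξ, hξ, hval⟩ := hK.sInf_mem hne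
    rw [← hval]
    exact hFpos ξ (mem_sphere_zero_iff_norm.1 hξ)

end
end
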